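/- Let D be a finite set and M a DSM on D. Suppose (U, X) and (U', X') are two pairs of subsets of D each satisfying: M contains a U-surjective shop and an X-total shop (respectively for U', X'), |U| (resp. |U'|) is minimal among cardinalities of subsets of D over which M contains a surjective shop, |X| (resp. |X'|) is minimal among cardinalities of subsets of D over which M contains a total shop, subject to these minimality conditions the intersection |U ∩ X| (resp. |U' ∩ X'|) is maximal, and U ∪ X = D = U' ∪ X'. Then U = U' and X = X'. -/

import Mathlib

namespace MC

/-- A shop (surjective hyper-operation) on `D`: a total and surjective
hyper-operation `D → Set D`. -/
structure Shop (D : Type) where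
  f : D → Set D
  total : ∀ a : D, (f a).Nonempty
  surj : ∀ b : D, ∃ a : D, b ∈ f a

variable {D : Type}

/-- Composition of shops: `(comp g f) x = g (f x)`. -/
def Shop.comp (g f : Shop D) : Shop D where
  f := fun x => {z | ∃ y ∈ f.f x, z ∈ g.f y}
  total := by
    intro a
    obtain ⟨y, hy⟩ := f.total a
    obtain ⟨z, hz⟩ := g.total y
    exact ⟨z, y, hy, hz⟩
  surj := by
    intro b
    obtain ⟨y, hy⟩ := g.surj b
    obtain ⟨x, hx⟩ := f.surj y
    exact ⟨x, y, hx, hy⟩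

/-- The identity shop `x ↦ {x}`. -/
def Shop.id : Shop D where
  f := fun x => {x}
  total := fun a => ⟨a, rfl⟩
  surj := fun b => ⟨b, rfl⟩

/-- Iterates of a shop: `pow f 0 = id` and `pow f (n+1) = f ∘ (pow f n)`. -/
def Shop.pow (f : Shop D) : ℕ → Shop D
  | 0 => Shop.id
  | n + 1 => Shop.comp f (f.pow n)

/-- `f` is `U`-surjective (a `U`-shop): `f(U) = D`. -/
def Shop.USurj (f : Shop D) (U : Set D) : Prop :=
  ∀ b : D, ∃ u ∈ U, b ∈ f.f u

/-- `f` is `X`-total (an `X`-shop): `f⁻¹(X) = D`. -/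
def Shop.XTotal (f : Shop D) (X : Set D) : Prop :=
  ∀ a : D, ∃ x ∈ X, x ∈ f.f a

end MC

namespace MC

/-- A down-shop-monoid (DSM): a set of shops containing the identity shop,
closed under composition, and closed under sub-shops. -/
def IsDSM {D : Type} (M : Set (Shop D)) : Prop :=
  Shop.id ∈ M ∧
  (∀ f ∈ M, ∀ g ∈ M, Shop.comp g f ∈ M) ∧
  ∀ f ∈ M, ∀ g : Shop D, (∀ x : D, g.f x ⊆ f.f x) → g ∈ M

end MC

namespace MC

variable {D : Type}

lemma pow_mem {M : Set (Shop D)} (hM : IsDSM M) {h : Shop D} (hh : h ∈ M) :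
    ∀ n, Shop.pow h n ∈ M
  | 0 => hM.1
  | n + 1 => hM.2.1 _ (pow_mem hM hh n) _ hh

lemma comp_USurj {f g : Shop D} {U : Set D} (hf : f.USurj U) :
    (Shop.comp g f).USurj U := fun b => by
  obtain ⟨y, hy⟩ := g.surj b
  obtain ⟨u, hu, hyu⟩ := hf y
  exact ⟨u, hu, y, hyu, hy⟩

lemma comp_XTotal {f g : Shop D} {X : Set D} (hg : g.XTotal X) :
    (Shop.comp g f).XTotal X := fun a => by
  obtain ⟨y, hy⟩ := f.total a
  obtain ⟨x, hx, hxy⟩ := hg y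
  exact ⟨x, hx, y, hy, hxy⟩

lemma pow_USurj {h : Shop D} {U : Set D} (hs : h.USurj U) :
    ∀ n, (Shop.pow h (n + 1)).USurj U
  | 0 => fun b => by
      obtain ⟨u, hu, hb⟩ := hs b
      exact ⟨u, hu, u, rfl, hb⟩
  | n + 1 => fun b => by
      obtain ⟨a, hab⟩ := h.surj b
      obtain ⟨u, hu, ha⟩ := pow_USurj hs n a
      exact ⟨u, hu, a, ha, hab⟩

lemma pow_XTotal {h : Shop D} {X : Set D} (ht : h.XTotal X) (n : ℕ) :
    (Shop.pow h (n + 1)).XTotal X := fun a => by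
  obtain ⟨y, hy⟩ := (Shop.pow h n).total a
  obtain ⟨x, hx, hxy⟩ := ht y
  exact ⟨x, hx, y, hy, hxy⟩

lemma pow_add_mem {h : Shop D} :
    ∀ {m' m : ℕ} {a b c : D}, b ∈ (Shop.pow h m).f a → c ∈ (Shop.pow h m').f b →
      c ∈ (Shop.pow h (m' + m)).f a := by
  intro m'
  induction m' with
  | zero =>
      intro m a b c hb hc
      have hcb : c = b := hc
      rw [Nat.zero_add]
      exact hcb ▸ hb
  | succ m' ih =>
      intro m a b c hb hc
      obtain ⟨y, hy, hcy⟩ := hc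
      rw [Nat.succ_add]
      exact ⟨y, ih hb hy, hcy⟩

lemma mem_pow_mul {h : Shop D} {a : D} {m : ℕ} (hm : a ∈ (Shop.pow h m).f a) :
    ∀ k, a ∈ (Shop.pow h (m * k)).f a
  | 0 => by rw [Nat.mul_zero]; exact rfl
  | k + 1 => by rw [Nat.mul_succ]; exact pow_add_mem hm (mem_pow_mul hm k)

lemma iterate_id_of_injOn [Finite D] {S : Set D} {α : D → D}
    (hmaps : ∀ u ∈ S, α u ∈ S) (hinj : Set.InjOn α S) :
    ∃ N : ℕ, 0 < N ∧ ∀ u ∈ S, α^[N] u = u := by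
  classical
  let e : S → S := fun x => ⟨α x.1, hmaps x.1 x.2⟩
  have einj : Function.Injective e := fun x y hxy =>
    Subtype.ext (hinj x.2 y.2 (congrArg Subtype.val hxy))
  have ebij : Function.Bijective e := Finite.injective_iff_bijective.mp einj
  obtain ⟨i, j, hne, heq⟩ := Finite.exists_ne_map_eq_of_infinite (fun n : ℕ => e^[n])
  obtain ⟨i, j, hlt, heq⟩ : ∃ i j : ℕ, i < j ∧ e^[i] = e^[j] := by
    rcases Nat.lt_or_ge i j with h | h
    · exact ⟨i, j, h, heq⟩
    · exact ⟨j, i, by omega, heq.symm⟩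
  have hid : ∀ x : S, e^[j - i] x = x := by
    intro x
    obtain ⟨y, hy⟩ := (Function.Bijective.iterate ebij i).2 x
    have h1 : e^[j - i] (e^[i] y) = e^[(j - i) + i] y :=
      (Function.iterate_add_apply e (j - i) i y).symm
    rw [Nat.sub_add_cancel hlt.le] at h1
    rw [← hy, h1, ← heq]
  have key : ∀ (k : ℕ) (x : S), (e^[k] x : D) = α^[k] (x : D) := by
    intro k
    induction k with
    | zero => intro x; rfl
    | succ k ih =>
        intro x
        rw [Function.iterate_succ_apply, Function.iterate_succ_apply]
        exact ih (e x)
  refine ⟨j - i, by omega, fun u hu => ?_⟩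
  have h1 := hid ⟨u, hu⟩
  have h2 := key (j - i) ⟨u, hu⟩
  rw [h1] at h2
  exact h2.symm

lemma exists_reflexive [Finite D] {M : Set (Shop D)} (hM : IsDSM M)
    {h : Shop D} {U X : Set D} (hh : h ∈ M) (hs : h.USurj U) (ht : h.XTotal X)
    (hUmin : ∀ V : Set D, (∃ f ∈ M, f.USurj V) → U.ncard ≤ V.ncard)
    (hXmin : ∀ Y : Set D, (∃ f ∈ M, f.XTotal Y) → X.ncard ≤ Y.ncard)
    (hred : U ∪ X = Set.univ) :
    ∃ H ∈ M, (∀ a, a ∈ H.f a) ∧ H.USurj U ∧ H.XTotal X := by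
  classical
  choose α hαU hαmem using hs
  choose β hβX hβmem using ht
  have hhh : Shop.comp h h ∈ M := hM.2.1 h hh h hh
  have hinjα : Set.InjOn α U := by
    intro u₁ h₁ u₂ h₂ heq
    by_contra hne
    have hsurj2 : (Shop.comp h h).USurj (α '' (U \ {u₂})) := by
      intro b
      refine ⟨α (α b), ?_, α b, hαmem (α b), hαmem b⟩
      by_cases hc : α b = u₂
      · exact ⟨u₁, ⟨h₁, hne⟩, by rw [heq, ← hc]⟩
      · exact ⟨α b, ⟨hαU b, hc⟩, rfl⟩
    have h1 : U.ncard ≤ (α '' (U \ {u₂})).ncard := hUmin _ ⟨_, hhh, hsurj2⟩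
    have h2 : (α '' (U \ {u₂})).ncard ≤ (U \ {u₂}).ncard := Set.ncard_image_le (Set.toFinite _)
    have h3 : (U \ {u₂}).ncard < U.ncard :=
      Set.ncard_diff_singleton_lt_of_mem h₂ (Set.toFinite _)
    omega
  have hinjβ : Set.InjOn β X := by
    intro x₁ h₁ x₂ h₂ heq
    by_contra hne
    have htot2 : (Shop.comp h h).XTotal (β '' (X \ {x₂})) := by
      intro a
      refine ⟨β (β a), ?_, β a, hβmem a, hβmem (β a)⟩
      by_cases hc : β a = x₂
      · exact ⟨x₁, ⟨h₁, hne⟩, by rw [heq, ← hc]⟩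
      · exact ⟨β a, ⟨hβX a, hc⟩, rfl⟩
    have h1 : X.ncard ≤ (β '' (X \ {x₂})).ncard := hXmin _ ⟨_, hhh, htot2⟩
    have h2 : (β '' (X \ {x₂})).ncard ≤ (X \ {x₂}).ncard := Set.ncard_image_le (Set.toFinite _)
    have h3 : (X \ {x₂}).ncard < X.ncard :=
      Set.ncard_diff_singleton_lt_of_mem h₂ (Set.toFinite _)
    omega
  obtain ⟨N₁, hN₁pos, hN₁⟩ := iterate_id_of_injOn (fun u _ => hαU u) hinjα
  obtain ⟨N₂, hN₂pos, hN₂⟩ := iterate_id_of_injOn (fun x _ => hβX x) hinjβ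
  have chainα : ∀ (k : ℕ) (u : D), u ∈ U → u ∈ (Shop.pow h k).f (α^[k] u) := by
    intro k
    induction k with
    | zero => intro u _; exact rfl
    | succ k ih =>
        intro u hu
        rw [Function.iterate_succ_apply]
        exact ⟨α u, ih (α u) (hαU u), hαmem u⟩
  have chainβ : ∀ (k : ℕ) (a : D), β^[k] a ∈ (Shop.pow h k).f a := by
    intro k
    induction k with
    | zero => intro a; exact rfl
    | succ k ih =>
        intro a
        rw [Function.iterate_succ_apply']
        exact ⟨β^[k] a, ih a, hβmem (β^[k] a)⟩
  have hpos := Nat.mul_pos hN₁pos hN₂pos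
  obtain ⟨m, hm⟩ : ∃ m, N₁ * N₂ = m + 1 := ⟨N₁ * N₂ - 1, by omega⟩
  refine ⟨Shop.pow h (N₁ * N₂), pow_mem hM hh _, ?_, ?_, ?_⟩
  · intro a
    have hUX : a ∈ U ∪ X := by rw [hred]; exact Set.mem_univ a
    rcases hUX with ha | ha
    · have h1 : a ∈ (Shop.pow h N₁).f a := by
        have := chainα N₁ a ha
        rwa [hN₁ a ha] at this
      exact mem_pow_mul h1 N₂
    · have h1 : a ∈ (Shop.pow h N₂).f a := by
        have := chainβ N₂ a
        rwa [hN₂ a ha] at this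
      rw [Nat.mul_comm]
      exact mem_pow_mul h1 N₁
  · rw [hm]; exact pow_USurj (fun b => ⟨α b, hαU b, hαmem b⟩) m
  · rw [hm]; exact pow_XTotal (fun a => ⟨β a, hβX a, hβmem a⟩) m

lemma exists_stable_pow [Finite D] (K : Shop D) (hrefl : ∀ a, a ∈ K.f a) :
    ∃ N : ℕ, 0 < N ∧ ∀ {a b c : D}, b ∈ (Shop.pow K N).f a → c ∈ (Shop.pow K N).f b →
      c ∈ (Shop.pow K N).f a := by
  have hmono : ∀ (n : ℕ) (a : D), (Shop.pow K n).f a ⊆ (Shop.pow K (n + 1)).f a :=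
    fun n a b hb => ⟨b, hb, hrefl b⟩
  have hmono' : ∀ (k n : ℕ) (a : D), (Shop.pow K n).f a ⊆ (Shop.pow K (n + k)).f a := by
    intro k
    induction k with
    | zero => exact fun n a _ h => h
    | succ k ih => exact fun n a x hx => hmono (n + k) a (ih n a hx)
  obtain ⟨i, j, hne, heq⟩ := Finite.exists_ne_map_eq_of_infinite (fun n : ℕ => (Shop.pow K n).f)
  obtain ⟨i, j, hlt, heq⟩ : ∃ i j : ℕ, i < j ∧ (Shop.pow K i).f = (Shop.pow K j).f := by
    rcases Nat.lt_or_ge i j with h | h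
    · exact ⟨i, j, h, heq⟩
    · exact ⟨j, i, by omega, heq.symm⟩
  have hstep : ∀ {n m : ℕ}, (Shop.pow K n).f = (Shop.pow K m).f →
      (Shop.pow K (n + 1)).f = (Shop.pow K (m + 1)).f := by
    intro n m hnm
    funext a
    show {z | ∃ y ∈ (Shop.pow K n).f a, z ∈ K.f y} = {z | ∃ y ∈ (Shop.pow K m).f a, z ∈ K.f y}
    rw [hnm]
  have hone : (Shop.pow K (i + 1)).f = (Shop.pow K i).f := by
    funext a
    apply Set.Subset.antisymm
    · have h1 : (Shop.pow K (i + 1)).f a ⊆ (Shop.pow K (i + 1 + (j - (i + 1)))).f a :=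
        hmono' _ _ a
      rw [show i + 1 + (j - (i + 1)) = j by omega] at h1
      rw [heq]
      exact h1
    · exact hmono i a
  have hstable : ∀ k, (Shop.pow K (i + k)).f = (Shop.pow K i).f := by
    intro k
    induction k with
    | zero => rfl
    | succ k ih =>
        have h2 := hstep ih
        rw [hone] at h2
        exact h2
  refine ⟨i + 1, Nat.succ_pos i, ?_⟩
  intro a b c hb hc
  have h1 : c ∈ (Shop.pow K ((i + 1) + (i + 1))).f a := pow_add_mem hb hc
  have h2 : (Shop.pow K ((i + 1) + (i + 1))).f = (Shop.pow K i).f := by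
    rw [show (i + 1) + (i + 1) = i + (i + 2) by omega]
    exact hstable (i + 2)
  have h3 : (Shop.pow K (i + 1)).f = (Shop.pow K i).f := hstable 1
  rw [h2] at h1
  rw [h3]
  exact h1

end MC

namespace MC

/-- In a reduced DSM, the witnessing sets `U` and `X` are unique. -/
theorem reduced_DSM_UX_unique {D : Type} [Finite D]
    (M : Set (Shop D)) (hM : IsDSM M) (U X U' X' : Set D)
    (hU : ∃ f ∈ M, f.USurj U) (hX : ∃ f ∈ M, f.XTotal X)
    (hUmin : ∀ V : Set D, (∃ f ∈ M, f.USurj V) → U.ncard ≤ V.ncard)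
    (hXmin : ∀ Y : Set D, (∃ f ∈ M, f.XTotal Y) → X.ncard ≤ Y.ncard)
    (hmax : ∀ V Y : Set D, (∃ f ∈ M, f.USurj V) → (∃ f ∈ M, f.XTotal Y) →
      V.ncard = U.ncard → Y.ncard = X.ncard →
      (V ∩ Y).ncard ≤ (U ∩ X).ncard)
    (hred : U ∪ X = Set.univ)
    (hU' : ∃ f ∈ M, f.USurj U') (hX' : ∃ f ∈ M, f.XTotal X')
    (hUmin' : ∀ V : Set D, (∃ f ∈ M, f.USurj V) → U'.ncard ≤ V.ncard)
    (hXmin' : ∀ Y : Set D, (∃ f ∈ M, f.XTotal Y) → X'.ncard ≤ Y.ncard)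
    (hmax' : ∀ V Y : Set D, (∃ f ∈ M, f.USurj V) → (∃ f ∈ M, f.XTotal Y) →
      V.ncard = U'.ncard → Y.ncard = X'.ncard →
      (V ∩ Y).ncard ≤ (U' ∩ X').ncard)
    (hred' : U' ∪ X' = Set.univ) :
    U = U' ∧ X = X' := by
  classical
  obtain ⟨f₁, hf₁M, hf₁⟩ := hU
  obtain ⟨g₁, hg₁M, hg₁⟩ := hX
  obtain ⟨f₂, hf₂M, hf₂⟩ := hU'
  obtain ⟨g₂, hg₂M, hg₂⟩ := hX'
  obtain ⟨H₁, hH₁M, hH₁refl, hH₁s, hH₁t⟩ :=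
    exists_reflexive hM (hM.2.1 _ hf₁M _ hg₁M) (comp_USurj hf₁) (comp_XTotal hg₁)
      hUmin hXmin hred
  obtain ⟨H₂, hH₂M, hH₂refl, hH₂s, hH₂t⟩ :=
    exists_reflexive hM (hM.2.1 _ hf₂M _ hg₂M) (comp_USurj hf₂) (comp_XTotal hg₂)
      hUmin' hXmin' hred'
  set K : Shop D := Shop.comp H₂ H₁ with hKdef
  have hKM : K ∈ M := hM.2.1 _ hH₁M _ hH₂M
  have hKrefl : ∀ a, a ∈ K.f a := fun a => ⟨a, hH₁refl a, hH₂refl a⟩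
  have hKU : K.USurj U := fun b => by
    obtain ⟨u, hu, hb⟩ := hH₁s b
    exact ⟨u, hu, b, hb, hH₂refl b⟩
  have hKU' : K.USurj U' := fun b => by
    obtain ⟨u, hu, hb⟩ := hH₂s b
    exact ⟨u, hu, u, hH₁refl u, hb⟩
  have hKX : K.XTotal X := fun a => by
    obtain ⟨x, hx, hxa⟩ := hH₁t a
    exact ⟨x, hx, x, hxa, hH₂refl x⟩
  have hKX' : K.XTotal X' := fun a => by
    obtain ⟨x, hx, hxa⟩ := hH₂t a
    exact ⟨x, hx, a, hH₁refl a, hxa⟩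
  obtain ⟨N, hNpos, htransN⟩ := exists_stable_pow K hKrefl
  obtain ⟨m, hm⟩ : ∃ m, N = m + 1 := ⟨N - 1, by omega⟩
  have hKN : Shop.pow K N ∈ M := pow_mem hM hKM N
  have covU : (Shop.pow K N).USurj U := by rw [hm]; exact pow_USurj hKU m
  have covU' : (Shop.pow K N).USurj U' := by rw [hm]; exact pow_USurj hKU' m
  have covX : (Shop.pow K N).XTotal X := by rw [hm]; exact pow_XTotal hKX m
  have covX' : (Shop.pow K N).XTotal X' := by rw [hm]; exact pow_XTotal hKX' m
  have minB : ∀ V : Set D, (Shop.pow K N).USurj V → U.ncard ≤ V.ncard :=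
    fun V hV => hUmin V ⟨_, hKN, hV⟩
  have minA : ∀ Y : Set D, (Shop.pow K N).XTotal Y → X.ncard ≤ Y.ncard :=
    fun Y hY => hXmin Y ⟨_, hKN, hY⟩
  have hpq : U'.ncard = U.ncard := le_antisymm (hUmin' U ⟨f₁, hf₁M, hf₁⟩) (hUmin U' ⟨f₂, hf₂M, hf₂⟩)
  have hq : X'.ncard = X.ncard := le_antisymm (hXmin' X ⟨g₁, hg₁M, hg₁⟩) (hXmin X' ⟨g₂, hg₂M, hg₂⟩)
  have hunion : ∀ V Y : Set D, (Shop.pow K N).USurj V → (Shop.pow K N).XTotal Y →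
      V.ncard = U.ncard → Y.ncard = X.ncard → V ∪ Y = Set.univ := by
    intro V Y hV hY hVc hYc
    have hle : (V ∩ Y).ncard ≤ (U ∩ X).ncard :=
      hmax V Y ⟨_, hKN, hV⟩ ⟨_, hKN, hY⟩ hVc hYc
    have e1 : (V ∪ Y).ncard + (V ∩ Y).ncard = V.ncard + Y.ncard :=
      Set.ncard_union_add_ncard_inter V Y (Set.toFinite _) (Set.toFinite _)
    have e2 : (U ∪ X).ncard + (U ∩ X).ncard = U.ncard + X.ncard :=
      Set.ncard_union_add_ncard_inter U X (Set.toFinite _) (Set.toFinite _)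
    rw [hred] at e2
    rw [hVc, hYc] at e1
    have hbig : (Set.univ : Set D).ncard ≤ (V ∪ Y).ncard := by omega
    exact Set.eq_of_subset_of_ncard_le (Set.subset_univ _) hbig (Set.toFinite _)
  -- U ⊆ U'
  have hUU' : U ⊆ U' := by
    intro u hu
    obtain ⟨u', hu'U', huR⟩ := covU' u
    by_cases hcase : u' = u
    · exact hcase ▸ hu'U'
    have hu'nU : u' ∉ U := by
      intro hu'U
      have hcov : (Shop.pow K N).USurj (U \ {u}) := by
        intro b
        obtain ⟨v, hv, hbv⟩ := covU b
        by_cases hvu : v = u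
        · exact ⟨u', ⟨hu'U, hcase⟩, htransN huR (hvu ▸ hbv)⟩
        · exact ⟨v, ⟨hv, hvu⟩, hbv⟩
      have hA := minB _ hcov
      have hB := Set.ncard_diff_singleton_lt_of_mem hu (Set.toFinite _)
      omega
    obtain ⟨w, hwU, hw⟩ := covU u'
    have hwne : w ≠ u' := fun hcontra => hu'nU (hcontra ▸ hwU)
    set V' : Set D := insert w (U' \ {u'}) with hV'def
    have hV'cov : (Shop.pow K N).USurj V' := by
      intro b
      obtain ⟨v, hv, hbv⟩ := covU' b
      by_cases hvu : v = u'
      · exact ⟨w, Set.mem_insert _ _, htransN hw (hvu ▸ hbv)⟩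
      · exact ⟨v, Set.mem_insert_of_mem _ ⟨hv, hvu⟩, hbv⟩
    have hV'c : V'.ncard = U.ncard := by
      refine le_antisymm ?_ (minB _ hV'cov)
      have h1 : V'.ncard ≤ (U' \ {u'}).ncard + 1 := Set.ncard_insert_le _ _
      have h2 : (U' \ {u'}).ncard = U'.ncard - 1 :=
        Set.ncard_diff_singleton_of_mem hu'U'
      have h3 : 0 < U'.ncard := (Set.ncard_pos (Set.toFinite _)).mpr ⟨u', hu'U'⟩
      omega
    have hu'V' : u' ∉ V' := by
      intro hmem
      rcases Set.mem_insert_iff.mp hmem with hh | hh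
      · exact hwne hh.symm
      · exact hh.2 rfl
    have hu'X : u' ∈ X := by
      have huniv := hunion V' X hV'cov covX hV'c rfl
      have hmem : u' ∈ V' ∪ X := by rw [huniv]; exact Set.mem_univ u'
      rcases (Set.mem_union _ _ _).mp hmem with hh | hh
      · exact absurd hh hu'V'
      · exact hh
    set Y' : Set D := insert u (X \ {u'}) with hY'def
    have hY'cov : (Shop.pow K N).XTotal Y' := by
      intro a
      obtain ⟨y, hy, hya⟩ := covX a
      by_cases hyu : y = u'
      · exact ⟨u, Set.mem_insert _ _, htransN (hyu ▸ hya) huR⟩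
      · exact ⟨y, Set.mem_insert_of_mem _ ⟨hy, hyu⟩, hya⟩
    have hY'c : Y'.ncard = X.ncard := by
      refine le_antisymm ?_ (minA _ hY'cov)
      have h1 : Y'.ncard ≤ (X \ {u'}).ncard + 1 := Set.ncard_insert_le _ _
      have h2 : (X \ {u'}).ncard = X.ncard - 1 :=
        Set.ncard_diff_singleton_of_mem hu'X
      have h3 : 0 < X.ncard := (Set.ncard_pos (Set.toFinite _)).mpr ⟨u', hu'X⟩
      omega
    have hu'Y' : u' ∉ Y' := by
      intro hmem
      rcases Set.mem_insert_iff.mp hmem with hh | hh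
      · exact hcase hh
      · exact hh.2 rfl
    have huniv := hunion V' Y' hV'cov hY'cov hV'c hY'c
    have hmem : u' ∈ V' ∪ Y' := by rw [huniv]; exact Set.mem_univ u'
    rcases (Set.mem_union _ _ _).mp hmem with hh | hh
    · exact absurd hh hu'V'
    · exact absurd hh hu'Y'
  -- X ⊆ X'
  have hXX' : X ⊆ X' := by
    intro x hx
    obtain ⟨x', hx'X', hx'R⟩ := covX' x
    by_cases hcase : x' = x
    · exact hcase ▸ hx'X'
    have hx'nX : x' ∉ X := by
      intro hx'X
      have hcov : (Shop.pow K N).XTotal (X \ {x}) := by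
        intro a
        obtain ⟨y, hy, hya⟩ := covX a
        by_cases hyx : y = x
        · exact ⟨x', ⟨hx'X, hcase⟩, htransN (hyx ▸ hya) hx'R⟩
        · exact ⟨y, ⟨hy, hyx⟩, hya⟩
      have hA := minA _ hcov
      have hB := Set.ncard_diff_singleton_lt_of_mem hx (Set.toFinite _)
      omega
    obtain ⟨y₀, hy₀X, hy₀⟩ := covX x'
    have hy₀ne : y₀ ≠ x' := fun hcontra => hx'nX (hcontra ▸ hy₀X)
    set Y'' : Set D := insert y₀ (X' \ {x'}) with hY''def
    have hY''cov : (Shop.pow K N).XTotal Y'' := by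
      intro a
      obtain ⟨y, hy, hya⟩ := covX' a
      by_cases hyx : y = x'
      · exact ⟨y₀, Set.mem_insert _ _, htransN (hyx ▸ hya) hy₀⟩
      · exact ⟨y, Set.mem_insert_of_mem _ ⟨hy, hyx⟩, hya⟩
    have hY''c : Y''.ncard = X.ncard := by
      refine le_antisymm ?_ (minA _ hY''cov)
      have h1 : Y''.ncard ≤ (X' \ {x'}).ncard + 1 := Set.ncard_insert_le _ _
      have h2 : (X' \ {x'}).ncard = X'.ncard - 1 :=
        Set.ncard_diff_singleton_of_mem hx'X'
      have h3 : 0 < X'.ncard := (Set.ncard_pos (Set.toFinite _)).mpr ⟨x', hx'X'⟩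
      omega
    have hx'Y'' : x' ∉ Y'' := by
      intro hmem
      rcases Set.mem_insert_iff.mp hmem with hh | hh
      · exact hy₀ne hh.symm
      · exact hh.2 rfl
    have hx'U : x' ∈ U := by
      have huniv := hunion U Y'' covU hY''cov rfl hY''c
      have hmem : x' ∈ U ∪ Y'' := by rw [huniv]; exact Set.mem_univ x'
      rcases (Set.mem_union _ _ _).mp hmem with hh | hh
      · exact hh
      · exact absurd hh hx'Y''
    set V'' : Set D := insert x (U \ {x'}) with hV''def
    have hV''cov : (Shop.pow K N).USurj V'' := by
      intro b
      obtain ⟨v, hv, hbv⟩ := covU b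
      by_cases hvx : v = x'
      · exact ⟨x, Set.mem_insert _ _, htransN hx'R (hvx ▸ hbv)⟩
      · exact ⟨v, Set.mem_insert_of_mem _ ⟨hv, hvx⟩, hbv⟩
    have hV''c : V''.ncard = U.ncard := by
      refine le_antisymm ?_ (minB _ hV''cov)
      have h1 : V''.ncard ≤ (U \ {x'}).ncard + 1 := Set.ncard_insert_le _ _
      have h2 : (U \ {x'}).ncard = U.ncard - 1 :=
        Set.ncard_diff_singleton_of_mem hx'U
      have h3 : 0 < U.ncard := (Set.ncard_pos (Set.toFinite _)).mpr ⟨x', hx'U⟩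
      omega
    have hx'V'' : x' ∉ V'' := by
      intro hmem
      rcases Set.mem_insert_iff.mp hmem with hh | hh
      · exact hcase hh
      · exact hh.2 rfl
    have huniv := hunion V'' Y'' hV''cov hY''cov hV''c hY''c
    have hmem : x' ∈ V'' ∪ Y'' := by rw [huniv]; exact Set.mem_univ x'
    rcases (Set.mem_union _ _ _).mp hmem with hh | hh
    · exact absurd hh hx'V''
    · exact absurd hh hx'Y''
  exact ⟨Set.eq_of_subset_of_ncard_le hUU' hpq.le (Set.toFinite _),
    Set.eq_of_subset_of_ncard_le hXX' hq.le (Set.toFinite _)⟩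

end MC
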